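/- Let α ∈ ℝ and let φ be a non-negative locally integrable function satisfying: there are constants C₁,C₂,C₃,C₄>0 with C₁ ≤ φ(s)/s^{2α} ≤ C₂ for all s ≥ 1 and C₃ ≤ φ(s)/s^{2α+1} ≤ C₄ for all 0<s<1. Then there exist constants c,C>0 (depending only on C₁,C₂,C₃,C₄) such that for every non-negative measurable function g on (0,∞) and every x>0, c·F(x) ≤ ∫₀ˣ (H*_{α,φ}g)(y) dy ≤ C·F(x), where F(x) = ∫₀ˣ ln(x/t)·g(t)dt + ∫₀ˣ g(t)dt + x·∫ₓ^∞ (g(t)/t)dt. -/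

import Mathlib

open MeasureTheory Set
open scoped ENNReal

lemma my_lintegral_image {s : Set ℝ} {f f' : ℝ → ℝ} (hs : MeasurableSet s)
    (hf' : ∀ x ∈ s, HasDerivWithinAt f (f' x) s x) (hf : InjOn f s) (g : ℝ → ℝ≥0∞) :
    ∫⁻ x in f '' s, g x = ∫⁻ x in s, ENNReal.ofReal |f' x| * g (f x) := by
  simpa only [ContinuousLinearMap.det_toSpanSingleton] using
    MeasureTheory.lintegral_image_eq_lintegral_abs_det_fderiv_mul volume hs
      (fun x hx => (hf' x hx).hasFDerivWithinAt) hf g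

lemma my_lint_rpow {u : ℝ} (hu : 0 < u) :
    ∫⁻ s in Ioi u, ENNReal.ofReal (s ^ (-2:ℝ)) = ENNReal.ofReal u⁻¹ := by
  rw [← ofReal_integral_eq_lintegral_ofReal
      (integrableOn_Ioi_rpow_of_lt (by norm_num) hu)
      (by filter_upwards [ae_restrict_mem measurableSet_Ioi] with s hs;
          exact Real.rpow_nonneg (le_of_lt (lt_trans hu hs)) _)]
  rw [integral_Ioi_rpow_of_lt (by norm_num) hu]
  norm_num [Real.rpow_neg_one]

lemma my_lint_inv {u : ℝ} (h0 : 0 < u) (h1 : u < 1) :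
    ∫⁻ s in Ioo u 1, ENNReal.ofReal s⁻¹ = ENNReal.ofReal (Real.log u⁻¹) := by
  have hint : IntegrableOn (fun s : ℝ => s⁻¹) (Ioo u 1) := by
    apply (ContinuousOn.integrableOn_compact isCompact_Icc ?_).mono_set Ioo_subset_Icc_self
    exact continuousOn_inv₀.mono (fun y hy => ne_of_gt (lt_of_lt_of_le h0 hy.1))
  rw [← ofReal_integral_eq_lintegral_ofReal hint
      (by filter_upwards [ae_restrict_mem measurableSet_Ioo] with s hs;
          exact inv_nonneg.2 (le_of_lt (lt_trans h0 hs.1)))]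
  congr 1
  rw [← integral_Ioc_eq_integral_Ioo, ← intervalIntegral.integral_of_le h1.le,
    integral_inv (by simp [Set.uIcc_of_le h1.le]; exact h0), one_div]

lemma my_alg1 {s : ℝ} (hs : 0 < s) (α p : ℝ) :
    p / s ^ (2*α+2) = (p / s ^ (2*α)) * s ^ (-2:ℝ) := by
  rw [Real.rpow_add hs, Real.rpow_neg hs.le, div_mul_eq_div_div, div_eq_mul_inv]

lemma my_alg2 {s : ℝ} (hs : 0 < s) (α p : ℝ) :
    p / s ^ (2*α+2) = (p / s ^ (2*α+1)) * s⁻¹ := by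
  rw [show (2*α+2:ℝ) = (2*α+1)+1 by ring, Real.rpow_add_one hs.ne',
    div_mul_eq_div_div, div_eq_mul_inv]

lemma my_K_ge_one {α C₁ C₂ : ℝ} (hC₁ : 0 ≤ C₁) (hC₂ : 0 ≤ C₂) {φ : ℝ → ℝ}
    (hΦ : ∀ s : ℝ, 1 ≤ s → C₁ ≤ φ s / s ^ (2*α) ∧ φ s / s ^ (2*α) ≤ C₂) {u : ℝ} (hu : 1 ≤ u) :
    ENNReal.ofReal C₁ * ENNReal.ofReal u⁻¹ ≤ (∫⁻ s in Ioi u, ENNReal.ofReal (φ s / s ^ (2*α+2))) ∧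
    (∫⁻ s in Ioi u, ENNReal.ofReal (φ s / s ^ (2*α+2))) ≤ ENNReal.ofReal C₂ * ENNReal.ofReal u⁻¹ := by
  have hu0 : 0 < u := lt_of_lt_of_le one_pos hu
  constructor
  · rw [← my_lint_rpow hu0, ← lintegral_const_mul' _ _ ENNReal.ofReal_ne_top]
    refine lintegral_mono_ae ?_
    filter_upwards [ae_restrict_mem measurableSet_Ioi] with s hs
    have hs0 : 0 < s := lt_trans hu0 hs
    rw [← ENNReal.ofReal_mul hC₁, my_alg1 hs0]
    exact ENNReal.ofReal_le_ofReal
      (mul_le_mul_of_nonneg_right (hΦ s (le_of_lt (lt_of_le_of_lt hu hs))).1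
        (Real.rpow_nonneg hs0.le _))
  · rw [← my_lint_rpow hu0, ← lintegral_const_mul' _ _ ENNReal.ofReal_ne_top]
    refine lintegral_mono_ae ?_
    filter_upwards [ae_restrict_mem measurableSet_Ioi] with s hs
    have hs0 : 0 < s := lt_trans hu0 hs
    rw [← ENNReal.ofReal_mul hC₂, my_alg1 hs0]
    exact ENNReal.ofReal_le_ofReal
      (mul_le_mul_of_nonneg_right (hΦ s (le_of_lt (lt_of_le_of_lt hu hs))).2
        (Real.rpow_nonneg hs0.le _))

lemma my_K_lt_one {α C₁ C₂ C₃ C₄ : ℝ} (hC₁ : 0 ≤ C₁) (hC₂ : 0 ≤ C₂) (hC₃ : 0 ≤ C₃) (hC₄ : 0 ≤ C₄)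
    {φ : ℝ → ℝ}
    (hΦ1 : ∀ s : ℝ, 1 ≤ s → C₁ ≤ φ s / s ^ (2*α) ∧ φ s / s ^ (2*α) ≤ C₂)
    (hΦ2 : ∀ s : ℝ, 0 < s → s < 1 → C₃ ≤ φ s / s ^ (2*α+1) ∧ φ s / s ^ (2*α+1) ≤ C₄)
    {u : ℝ} (h0 : 0 < u) (h1 : u < 1) :
    ENNReal.ofReal C₃ * ENNReal.ofReal (Real.log u⁻¹) + ENNReal.ofReal C₁ ≤
      (∫⁻ s in Ioi u, ENNReal.ofReal (φ s / s ^ (2*α+2))) ∧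
    (∫⁻ s in Ioi u, ENNReal.ofReal (φ s / s ^ (2*α+2))) ≤
      ENNReal.ofReal C₄ * ENNReal.ofReal (Real.log u⁻¹) + ENNReal.ofReal C₂ := by
  have hsplit : (∫⁻ s in Ioi u, ENNReal.ofReal (φ s / s ^ (2*α+2))) =
      (∫⁻ s in Ioo u 1, ENNReal.ofReal (φ s / s ^ (2*α+2))) +
      (∫⁻ s in Ici (1:ℝ), ENNReal.ofReal (φ s / s ^ (2*α+2))) := by
    rw [← Set.Ioo_union_Ici_eq_Ioi h1,
      lintegral_union measurableSet_Ici ((Set.Iio_disjoint_Ici le_rfl).mono_left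
        Set.Ioo_subset_Iio_self)]
  have hIci : (∫⁻ s in Ici (1:ℝ), ENNReal.ofReal (φ s / s ^ (2*α+2))) =
      ∫⁻ s in Ioi (1:ℝ), ENNReal.ofReal (φ s / s ^ (2*α+2)) :=
    (setLIntegral_congr (MeasureTheory.Ioi_ae_eq_Ici)).symm
  have hIoi1 := my_K_ge_one hC₁ hC₂ hΦ1 (le_refl (1:ℝ))
  simp only [inv_one, ENNReal.ofReal_one, mul_one] at hIoi1
  have hlow : ENNReal.ofReal C₃ * ENNReal.ofReal (Real.log u⁻¹) ≤
      ∫⁻ s in Ioo u 1, ENNReal.ofReal (φ s / s ^ (2*α+2)) := by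
    rw [← my_lint_inv h0 h1, ← lintegral_const_mul' _ _ ENNReal.ofReal_ne_top]
    refine lintegral_mono_ae ?_
    filter_upwards [ae_restrict_mem measurableSet_Ioo] with s hs
    have hs0 : 0 < s := lt_trans h0 hs.1
    rw [← ENNReal.ofReal_mul hC₃, my_alg2 hs0]
    exact ENNReal.ofReal_le_ofReal
      (mul_le_mul_of_nonneg_right (hΦ2 s hs0 hs.2).1 (inv_nonneg.2 hs0.le))
  have hhigh : (∫⁻ s in Ioo u 1, ENNReal.ofReal (φ s / s ^ (2*α+2))) ≤
      ENNReal.ofReal C₄ * ENNReal.ofReal (Real.log u⁻¹) := by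
    rw [← my_lint_inv h0 h1, ← lintegral_const_mul' _ _ ENNReal.ofReal_ne_top]
    refine lintegral_mono_ae ?_
    filter_upwards [ae_restrict_mem measurableSet_Ioo] with s hs
    have hs0 : 0 < s := lt_trans h0 hs.1
    rw [← ENNReal.ofReal_mul hC₄, my_alg2 hs0]
    exact ENNReal.ofReal_le_ofReal
      (mul_le_mul_of_nonneg_right (hΦ2 s hs0 hs.2).2 (inv_nonneg.2 hs0.le))
  rw [hsplit, hIci]
  exact ⟨add_le_add hlow hIoi1.1, add_le_add hhigh hIoi1.2⟩

lemma my_sub (α : ℝ) (φ : ℝ → ℝ) (hφ0 : ∀ s, 0 ≤ φ s)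
    (hφae : AEMeasurable (fun s => ENNReal.ofReal (φ s / s ^ (2*α+2)))
      (volume.restrict (Ioi 0)))
    {x t : ℝ} (hx : 0 < x) (ht : 0 < t) (cc : ℝ≥0∞) :
    (∫⁻ y in Ioo 0 x, ENNReal.ofReal (y ^ (2*α) * φ (t/y)) * cc)
      = (∫⁻ s in Ioi (t/x), ENNReal.ofReal (φ s / s ^ (2*α+2)))
          * (ENNReal.ofReal (t ^ (2*α+1)) * cc) := by
  have htx : 0 < t / x := div_pos ht hx
  have himg : (fun s => t / s) '' Ioi (t/x) = Ioo 0 x := by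
    ext z
    simp only [mem_image, mem_Ioi, mem_Ioo]
    constructor
    · rintro ⟨s, hs, rfl⟩
      have hs0 : 0 < s := lt_trans htx hs
      refine ⟨div_pos ht hs0, ?_⟩
      rw [div_lt_iff₀ hs0]
      calc t = (t/x) * x := by field_simp
        _ < s * x := by exact mul_lt_mul_of_pos_right hs hx
        _ = x * s := mul_comm _ _
    · rintro ⟨hz0, hzx⟩
      refine ⟨t/z, ?_, by field_simp⟩
      exact div_lt_div_of_pos_left ht hz0 hzx
  have hderiv : ∀ s ∈ Ioi (t/x),
      HasDerivWithinAt (fun s => t / s) (-(t / s^2)) (Ioi (t/x)) s := by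
    intro s hs
    have hs0 : 0 < s := lt_trans htx hs
    have h1 : HasDerivAt (fun s : ℝ => t / s) (t * -(s^2)⁻¹) s := by
      simpa [div_eq_mul_inv] using (hasDerivAt_inv hs0.ne').const_mul t
    have h2 : t * -(s^2)⁻¹ = -(t / s^2) := by field_simp
    rw [h2] at h1
    exact h1.hasDerivWithinAt
  have hinj : InjOn (fun s => t / s) (Ioi (t/x)) := by
    intro a ha b hb hab
    have ha0 : 0 < a := lt_trans htx ha
    have hb0 : 0 < b := lt_trans htx hb
    simp only at hab
    rw [div_eq_div_iff ha0.ne' hb0.ne'] at hab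
    exact (mul_left_cancel₀ ht.ne' hab).symm
  have hφae' : AEMeasurable (fun s => ENNReal.ofReal (φ s / s ^ (2*α+2)))
      (volume.restrict (Ioi (t/x))) :=
    hφae.mono_measure (Measure.restrict_mono (Set.Ioi_subset_Ioi htx.le) le_rfl)
  rw [← himg, my_lintegral_image measurableSet_Ioi hderiv hinj,
    show (∫⁻ s in Ioi (t/x), ENNReal.ofReal (φ s / s ^ (2*α+2)))
        * (ENNReal.ofReal (t ^ (2*α+1)) * cc)
      = ∫⁻ s in Ioi (t/x), ENNReal.ofReal (φ s / s ^ (2*α+2))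
          * (ENNReal.ofReal (t ^ (2*α+1)) * cc) from
      (lintegral_mul_const'' _ hφae').symm]
  apply setLIntegral_congr_fun measurableSet_Ioi
  intro s hs
  beta_reduce
  have hs0 : 0 < s := lt_trans htx hs
  have hts : t / (t/s) = s := by field_simp
  have key : t/s^2 * ((t/s) ^ (2*α) * φ s) = φ s / s ^ (2*α+2) * t ^ (2*α+1) := by
    rw [Real.div_rpow ht.le hs0.le, Real.rpow_add hs0, Real.rpow_two,
      Real.rpow_add_one ht.ne']
    have h1 : s ^ (2*α) ≠ 0 := (Real.rpow_pos_of_pos hs0 _).ne'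
    field_simp
  have hnn : 0 ≤ φ s / s ^ (2*α+2) := div_nonneg (hφ0 s) (Real.rpow_nonneg hs0.le _)
  rw [hts, abs_neg, abs_of_pos (by positivity : 0 < t/s^2)]
  calc ENNReal.ofReal (t/s^2) * (ENNReal.ofReal ((t/s) ^ (2*α) * φ s) * cc)
      = ENNReal.ofReal (t/s^2 * ((t/s) ^ (2*α) * φ s)) * cc := by
        rw [ENNReal.ofReal_mul (by positivity : (0:ℝ) ≤ t/s^2), mul_assoc]
    _ = ENNReal.ofReal (φ s / s ^ (2*α+2) * t ^ (2*α+1)) * cc := by rw [key]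
    _ = ENNReal.ofReal (φ s / s ^ (2*α+2)) * (ENNReal.ofReal (t ^ (2*α+1)) * cc) := by
        rw [ENNReal.ofReal_mul hnn, mul_assoc]

/-- The quasi (adjoint) Dunkl–Hausdorff operator acting on `ℝ≥0∞`-valued functions. -/
noncomputable def dhAdjL (α : ℝ) (φ : ℝ → ℝ) (g : ℝ → ℝ≥0∞) (x : ℝ) : ℝ≥0∞ :=
  ENNReal.ofReal (x ^ (2*α)) * ∫⁻ y in Ioi (0:ℝ), ENNReal.ofReal (φ (y/x) / y ^ (2*α+1)) * g y

theorem I_dunklHAdj_estimate (α C₁ C₂ C₃ C₄ : ℝ)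
    (hC₁ : 0 < C₁) (hC₂ : 0 < C₂) (hC₃ : 0 < C₃) (hC₄ : 0 < C₄) :
    ∃ c C : ℝ, 0 < c ∧ 0 < C ∧
      ∀ φ : ℝ → ℝ, (∀ s, 0 ≤ φ s) → LocallyIntegrableOn φ (Ioi 0) →
        (∀ s : ℝ, 1 ≤ s → C₁ ≤ φ s / s ^ (2*α) ∧ φ s / s ^ (2*α) ≤ C₂) →
        (∀ s : ℝ, 0 < s → s < 1 → C₃ ≤ φ s / s ^ (2*α+1) ∧ φ s / s ^ (2*α+1) ≤ C₄) →
        ∀ g : ℝ → ℝ≥0∞, Measurable g → ∀ x : ℝ, 0 < x →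
          ENNReal.ofReal c * ((∫⁻ t in Ioo (0:ℝ) x, ENNReal.ofReal (Real.log (x/t)) * g t) + (∫⁻ t in Ioo (0:ℝ) x, g t) + ENNReal.ofReal x * ∫⁻ t in Ioi x, g t / ENNReal.ofReal t) ≤ (∫⁻ y in Ioo (0:ℝ) x, dhAdjL α φ g y) ∧
          (∫⁻ y in Ioo (0:ℝ) x, dhAdjL α φ g y) ≤ ENNReal.ofReal C * ((∫⁻ t in Ioo (0:ℝ) x, ENNReal.ofReal (Real.log (x/t)) * g t) + (∫⁻ t in Ioo (0:ℝ) x, g t) + ENNReal.ofReal x * ∫⁻ t in Ioi x, g t / ENNReal.ofReal t) := by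
  refine ⟨min C₁ C₃, max C₂ C₄, lt_min hC₁ hC₃, lt_of_lt_of_le hC₂ (le_max_left _ _), ?_⟩
  intro φ hφ0 hφloc hΦ1 hΦ2 g hg x hx
  -- measurable modification of φ
  have hφsm := hφloc.aestronglyMeasurable
  set φ'' := hφsm.mk φ with hφ''def
  have hφ''m : Measurable φ'' := hφsm.stronglyMeasurable_mk.measurable
  have hae : φ =ᵐ[volume.restrict (Ioi 0)] φ'' := hφsm.ae_eq_mk
  have hD : volume ({s | φ s ≠ φ'' s} ∩ Ioi 0) = 0 := by
    have h := hae
    rw [Filter.EventuallyEq, ae_iff, Measure.restrict_apply' measurableSet_Ioi] at h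
    exact h
  set N := toMeasurable volume ({s | φ s ≠ φ'' s} ∩ Ioi 0) with hNdef
  have hNm : MeasurableSet N := measurableSet_toMeasurable _ _
  have hN0 : volume N = 0 := by rw [hNdef, measure_toMeasurable]; exact hD
  have hNsub : ∀ s : ℝ, 0 < s → φ s ≠ φ'' s → s ∈ N :=
    fun s hs hne => subset_toMeasurable _ _ ⟨hne, hs⟩
  -- a.e.-measurability of the kernel integrand
  have hKae : AEMeasurable (fun s => ENNReal.ofReal (φ s / s ^ (2*α+2)))
      (volume.restrict (Ioi 0)) := by
    refine AEMeasurable.congr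
      (f := fun s => ENNReal.ofReal (φ'' s / s ^ (2*α+2))) ?_ ?_
    · exact ((hφ''m.div (by fun_prop : Measurable fun s : ℝ => s ^ (2*α+2))).ennreal_ofReal).aemeasurable
    · filter_upwards [hae] with s h
      rw [h]
  -- Step 1 : rewrite the operator
  have step1 : (∫⁻ y in Ioo 0 x, dhAdjL α φ g y)
      = ∫⁻ y in Ioo 0 x, ∫⁻ t in Ioi 0,
          ENNReal.ofReal (y ^ (2*α) * φ (t/y)) * (ENNReal.ofReal ((t ^ (2*α+1))⁻¹) * g t) := by
    refine setLIntegral_congr_fun measurableSet_Ioo (fun y hy => ?_)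
    simp only [dhAdjL]
    rw [← lintegral_const_mul' _ _ ENNReal.ofReal_ne_top]
    refine setLIntegral_congr_fun measurableSet_Ioi (fun t ht => ?_)
    rw [div_eq_mul_inv (φ (t/y)), ENNReal.ofReal_mul (hφ0 _),
      ENNReal.ofReal_mul (Real.rpow_nonneg hy.1.le _)]
    ring
  -- a.e.-measurability of the double integrand
  have hFae : AEMeasurable (fun p : ℝ × ℝ =>
      ENNReal.ofReal (p.1 ^ (2*α) * φ (p.2/p.1)) * (ENNReal.ofReal ((p.2 ^ (2*α+1))⁻¹) * g p.2))
      ((volume.restrict (Ioo 0 x)).prod (volume.restrict (Ioi 0))) := by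
    have hm : Measurable (fun p : ℝ × ℝ =>
        ENNReal.ofReal (p.1 ^ (2*α) * φ'' (p.2/p.1)) * (ENNReal.ofReal ((p.2 ^ (2*α+1))⁻¹) * g p.2)) := by
      refine Measurable.mul ?_ (Measurable.mul (by fun_prop) (hg.comp measurable_snd))
      exact Measurable.ennreal_ofReal
        ((by fun_prop : Measurable fun p : ℝ × ℝ => p.1 ^ (2*α)).mul
          (hφ''m.comp (measurable_snd.div measurable_fst)))
    have hS : ((volume.restrict (Ioo 0 x)).prod (volume.restrict (Ioi 0)))
        {p : ℝ × ℝ | p.2/p.1 ∈ N} = 0 := by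
      have hSm : MeasurableSet {p : ℝ × ℝ | p.2/p.1 ∈ N} :=
        (measurable_snd.div measurable_fst) hNm
      rw [Measure.prod_apply hSm]
      have hz : ∀ᵐ y ∂(volume.restrict (Ioo 0 x)),
          (volume.restrict (Ioi 0)) (Prod.mk y ⁻¹' {p : ℝ × ℝ | p.2/p.1 ∈ N}) = 0 := by
        filter_upwards [ae_restrict_mem measurableSet_Ioo] with y hy
        have hpre : (Prod.mk y ⁻¹' {p : ℝ × ℝ | p.2/p.1 ∈ N}) = (fun t => t / y) ⁻¹' N := rfl
        rw [hpre, Measure.restrict_apply' measurableSet_Ioi]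
        refine measure_mono_null inter_subset_left ?_
        have hdm : (fun t : ℝ => t / y) = fun t => t * y⁻¹ := funext fun t => div_eq_mul_inv t y
        rw [hdm, Real.volume_preimage_mul_right (inv_ne_zero hy.1.ne'), hN0, mul_zero]
      rw [lintegral_congr_ae hz, lintegral_zero]
    refine hm.aemeasurable.congr ?_
    have hbox : ∀ᵐ p : ℝ × ℝ ∂((volume.restrict (Ioo 0 x)).prod (volume.restrict (Ioi 0))),
        p ∈ (Ioo (0:ℝ) x) ×ˢ (Ioi (0:ℝ)) := by
      rw [Measure.prod_restrict]
      exact ae_restrict_mem (measurableSet_Ioo.prod measurableSet_Ioi)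
    filter_upwards [hbox, measure_eq_zero_iff_ae_notMem.mp hS] with p hp hpN
    have heq : φ'' (p.2/p.1) = φ (p.2/p.1) := by
      by_contra hne
      exact hpN (hNsub _ (div_pos hp.2 hp.1.1) (Ne.symm hne))
    rw [heq]
  -- Step 2 : Tonelli
  have step2 : (∫⁻ y in Ioo 0 x, ∫⁻ t in Ioi 0,
        ENNReal.ofReal (y ^ (2*α) * φ (t/y)) * (ENNReal.ofReal ((t ^ (2*α+1))⁻¹) * g t))
      = ∫⁻ t in Ioi 0, ∫⁻ y in Ioo 0 x,
          ENNReal.ofReal (y ^ (2*α) * φ (t/y)) * (ENNReal.ofReal ((t ^ (2*α+1))⁻¹) * g t) :=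
    lintegral_lintegral_swap hFae
  -- Step 3 : substitution
  have step3 : (∫⁻ t in Ioi 0, ∫⁻ y in Ioo 0 x,
        ENNReal.ofReal (y ^ (2*α) * φ (t/y)) * (ENNReal.ofReal ((t ^ (2*α+1))⁻¹) * g t))
      = ∫⁻ t in Ioi 0, g t * ∫⁻ s in Ioi (t/x), ENNReal.ofReal (φ s / s ^ (2*α+2)) := by
    refine setLIntegral_congr_fun measurableSet_Ioi (fun t ht => ?_)
    have ht0 : 0 < t := ht
    rw [my_sub α φ hφ0 hKae hx ht0]
    have h1 : ENNReal.ofReal (t ^ (2*α+1)) * (ENNReal.ofReal ((t ^ (2*α+1))⁻¹) * g t) = g t := by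
      rw [← mul_assoc, ← ENNReal.ofReal_mul (Real.rpow_nonneg ht0.le _),
        mul_inv_cancel₀ (Real.rpow_pos_of_pos ht0 _).ne', ENNReal.ofReal_one, one_mul]
    rw [h1, mul_comm]
  have hmain : (∫⁻ y in Ioo 0 x, dhAdjL α φ g y)
      = ∫⁻ t in Ioi 0, g t * ∫⁻ s in Ioi (t/x), ENNReal.ofReal (φ s / s ^ (2*α+2)) :=
    step1.trans (step2.trans step3)
  -- split the domain
  have hsplit : (∫⁻ t in Ioi 0, g t * ∫⁻ s in Ioi (t/x), ENNReal.ofReal (φ s / s ^ (2*α+2)))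
      = (∫⁻ t in Ioo 0 x, g t * ∫⁻ s in Ioi (t/x), ENNReal.ofReal (φ s / s ^ (2*α+2)))
        + ∫⁻ t in Ici x, g t * ∫⁻ s in Ioi (t/x), ENNReal.ofReal (φ s / s ^ (2*α+2)) := by
    rw [← Set.Ioo_union_Ici_eq_Ioi hx, lintegral_union measurableSet_Ici
      ((Set.Iio_disjoint_Ici le_rfl).mono_left Set.Ioo_subset_Iio_self)]
  have hmA : Measurable fun t => ENNReal.ofReal (Real.log (x/t)) * g t := by
    exact ((Real.measurable_log.comp (measurable_const.div measurable_id)).ennreal_ofReal).mul hg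
  -- lower bound on (0, x)
  have hlow1 : ENNReal.ofReal (min C₁ C₃) *
      ((∫⁻ t in Ioo (0:ℝ) x, ENNReal.ofReal (Real.log (x/t)) * g t) + ∫⁻ t in Ioo (0:ℝ) x, g t)
      ≤ ∫⁻ t in Ioo 0 x, g t * ∫⁻ s in Ioi (t/x), ENNReal.ofReal (φ s / s ^ (2*α+2)) := by
    rw [← lintegral_add_left hmA, ← lintegral_const_mul' _ _ ENNReal.ofReal_ne_top]
    refine lintegral_mono_ae ?_
    filter_upwards [ae_restrict_mem measurableSet_Ioo] with t htm
    have ht0 : 0 < t := htm.1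
    have hu0 : 0 < t/x := div_pos ht0 hx
    have hu1 : t/x < 1 := (div_lt_one hx).2 htm.2
    have hK := (my_K_lt_one hC₁.le hC₂.le hC₃.le hC₄.le hΦ1 hΦ2 hu0 hu1).1
    rw [inv_div] at hK
    calc ENNReal.ofReal (min C₁ C₃) * (ENNReal.ofReal (Real.log (x/t)) * g t + g t)
        = g t * (ENNReal.ofReal (min C₁ C₃) * ENNReal.ofReal (Real.log (x/t))
            + ENNReal.ofReal (min C₁ C₃)) := by ring
      _ ≤ g t * (ENNReal.ofReal C₃ * ENNReal.ofReal (Real.log (x/t)) + ENNReal.ofReal C₁) :=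
          mul_le_mul_right (add_le_add
            (mul_le_mul_left (ENNReal.ofReal_le_ofReal (min_le_right _ _)) _)
            (ENNReal.ofReal_le_ofReal (min_le_left _ _))) _
      _ ≤ _ := mul_le_mul_right hK _
  -- upper bound on (0, x)
  have hupp1 : (∫⁻ t in Ioo 0 x, g t * ∫⁻ s in Ioi (t/x), ENNReal.ofReal (φ s / s ^ (2*α+2)))
      ≤ ENNReal.ofReal (max C₂ C₄) *
        ((∫⁻ t in Ioo (0:ℝ) x, ENNReal.ofReal (Real.log (x/t)) * g t) + ∫⁻ t in Ioo (0:ℝ) x, g t) := by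
    rw [← lintegral_add_left hmA, ← lintegral_const_mul' _ _ ENNReal.ofReal_ne_top]
    refine lintegral_mono_ae ?_
    filter_upwards [ae_restrict_mem measurableSet_Ioo] with t htm
    have ht0 : 0 < t := htm.1
    have hu0 : 0 < t/x := div_pos ht0 hx
    have hu1 : t/x < 1 := (div_lt_one hx).2 htm.2
    have hK := (my_K_lt_one hC₁.le hC₂.le hC₃.le hC₄.le hΦ1 hΦ2 hu0 hu1).2
    rw [inv_div] at hK
    calc g t * (∫⁻ s in Ioi (t/x), ENNReal.ofReal (φ s / s ^ (2*α+2)))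
        ≤ g t * (ENNReal.ofReal C₄ * ENNReal.ofReal (Real.log (x/t)) + ENNReal.ofReal C₂) :=
          mul_le_mul_right hK _
      _ ≤ g t * (ENNReal.ofReal (max C₂ C₄) * ENNReal.ofReal (Real.log (x/t))
            + ENNReal.ofReal (max C₂ C₄)) :=
          mul_le_mul_right (add_le_add
            (mul_le_mul_left (ENNReal.ofReal_le_ofReal (le_max_right _ _)) _)
            (ENNReal.ofReal_le_ofReal (le_max_left _ _))) _
      _ = ENNReal.ofReal (max C₂ C₄) * (ENNReal.ofReal (Real.log (x/t)) * g t + g t) := by ring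
  -- lower bound on [x, ∞)
  have hlow2 : ENNReal.ofReal (min C₁ C₃) *
      (ENNReal.ofReal x * ∫⁻ t in Ioi x, g t / ENNReal.ofReal t)
      ≤ ∫⁻ t in Ici x, g t * ∫⁻ s in Ioi (t/x), ENNReal.ofReal (φ s / s ^ (2*α+2)) := by
    have e1 : ENNReal.ofReal (min C₁ C₃) *
        (ENNReal.ofReal x * ∫⁻ t in Ioi x, g t / ENNReal.ofReal t)
        = ∫⁻ t in Ici x,
            ENNReal.ofReal (min C₁ C₃) * (ENNReal.ofReal x * (g t / ENNReal.ofReal t)) := by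
      rw [← lintegral_const_mul' _ _ ENNReal.ofReal_ne_top,
        ← lintegral_const_mul' _ _ ENNReal.ofReal_ne_top]
      exact setLIntegral_congr (MeasureTheory.Ioi_ae_eq_Ici)
    rw [e1]
    refine lintegral_mono_ae ?_
    filter_upwards [ae_restrict_mem measurableSet_Ici] with t htm
    have ht0 : 0 < t := lt_of_lt_of_le hx htm
    have hu : 1 ≤ t/x := (one_le_div hx).2 htm
    have hK := (my_K_ge_one hC₁.le hC₂.le hΦ1 hu).1
    rw [inv_div] at hK
    have e2 : ENNReal.ofReal x * (g t / ENNReal.ofReal t) = g t * ENNReal.ofReal (x/t) := by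
      rw [div_eq_mul_inv x t, ENNReal.ofReal_mul hx.le, ENNReal.ofReal_inv_of_pos ht0,
        div_eq_mul_inv (g t)]
      ring
    calc ENNReal.ofReal (min C₁ C₃) * (ENNReal.ofReal x * (g t / ENNReal.ofReal t))
        = g t * (ENNReal.ofReal (min C₁ C₃) * ENNReal.ofReal (x/t)) := by rw [e2]; ring
      _ ≤ g t * (ENNReal.ofReal C₁ * ENNReal.ofReal (x/t)) :=
          mul_le_mul_right (mul_le_mul_left (ENNReal.ofReal_le_ofReal (min_le_left _ _)) _) _
      _ ≤ _ := mul_le_mul_right hK _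
  -- upper bound on [x, ∞)
  have hupp2 : (∫⁻ t in Ici x, g t * ∫⁻ s in Ioi (t/x), ENNReal.ofReal (φ s / s ^ (2*α+2)))
      ≤ ENNReal.ofReal (max C₂ C₄) *
        (ENNReal.ofReal x * ∫⁻ t in Ioi x, g t / ENNReal.ofReal t) := by
    have e1 : ENNReal.ofReal (max C₂ C₄) *
        (ENNReal.ofReal x * ∫⁻ t in Ioi x, g t / ENNReal.ofReal t)
        = ∫⁻ t in Ici x,
            ENNReal.ofReal (max C₂ C₄) * (ENNReal.ofReal x * (g t / ENNReal.ofReal t)) := by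
      rw [← lintegral_const_mul' _ _ ENNReal.ofReal_ne_top,
        ← lintegral_const_mul' _ _ ENNReal.ofReal_ne_top]
      exact setLIntegral_congr (MeasureTheory.Ioi_ae_eq_Ici)
    rw [e1]
    refine lintegral_mono_ae ?_
    filter_upwards [ae_restrict_mem measurableSet_Ici] with t htm
    have ht0 : 0 < t := lt_of_lt_of_le hx htm
    have hu : 1 ≤ t/x := (one_le_div hx).2 htm
    have hK := (my_K_ge_one hC₁.le hC₂.le hΦ1 hu).2
    rw [inv_div] at hK
    have e2 : ENNReal.ofReal x * (g t / ENNReal.ofReal t) = g t * ENNReal.ofReal (x/t) := by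
      rw [div_eq_mul_inv x t, ENNReal.ofReal_mul hx.le, ENNReal.ofReal_inv_of_pos ht0,
        div_eq_mul_inv (g t)]
      ring
    calc g t * (∫⁻ s in Ioi (t/x), ENNReal.ofReal (φ s / s ^ (2*α+2)))
        ≤ g t * (ENNReal.ofReal C₂ * ENNReal.ofReal (x/t)) := mul_le_mul_right hK _
      _ ≤ g t * (ENNReal.ofReal (max C₂ C₄) * ENNReal.ofReal (x/t)) :=
          mul_le_mul_right (mul_le_mul_left (ENNReal.ofReal_le_ofReal (le_max_left _ _)) _) _
      _ = ENNReal.ofReal (max C₂ C₄) * (ENNReal.ofReal x * (g t / ENNReal.ofReal t)) := by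
          rw [e2]; ring
  constructor
  · rw [hmain, hsplit]
    calc ENNReal.ofReal (min C₁ C₃) *
        ((∫⁻ t in Ioo (0:ℝ) x, ENNReal.ofReal (Real.log (x/t)) * g t)
          + (∫⁻ t in Ioo (0:ℝ) x, g t)
          + ENNReal.ofReal x * ∫⁻ t in Ioi x, g t / ENNReal.ofReal t)
        = ENNReal.ofReal (min C₁ C₃) *
            ((∫⁻ t in Ioo (0:ℝ) x, ENNReal.ofReal (Real.log (x/t)) * g t)
              + ∫⁻ t in Ioo (0:ℝ) x, g t)
          + ENNReal.ofReal (min C₁ C₃) *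
            (ENNReal.ofReal x * ∫⁻ t in Ioi x, g t / ENNReal.ofReal t) := by ring
      _ ≤ _ := add_le_add hlow1 hlow2
  · rw [hmain, hsplit]
    calc (∫⁻ t in Ioo 0 x, g t * ∫⁻ s in Ioi (t/x), ENNReal.ofReal (φ s / s ^ (2*α+2)))
          + (∫⁻ t in Ici x, g t * ∫⁻ s in Ioi (t/x), ENNReal.ofReal (φ s / s ^ (2*α+2)))
        ≤ ENNReal.ofReal (max C₂ C₄) *
            ((∫⁻ t in Ioo (0:ℝ) x, ENNReal.ofReal (Real.log (x/t)) * g t)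
              + ∫⁻ t in Ioo (0:ℝ) x, g t)
          + ENNReal.ofReal (max C₂ C₄) *
            (ENNReal.ofReal x * ∫⁻ t in Ioi x, g t / ENNReal.ofReal t) := add_le_add hupp1 hupp2
      _ = _ := by ring
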